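/- Let n ≥ 3 be an integer, β > 0 a real number, and set C_i = C(n−3+i, i). Define s_B = C_B·β^B / (∑_{i=0}^{B} C_i·β^i) for every integer B ≥ 0. Then s_{B+1} < s_B for every B ≥ 0. Consequently, for any reals p_sd ≥ 0 and p_sr > 0, the quantity T_c(B) = p_sd + p_sr·(1 − s_B) is strictly increasing in B. -/

import Mathlib

/-- Log-concavity of `k ↦ (m+k).choose k`. -/
lemma binom_logconc (m B : ℕ) :
    (m + (B + 2)).choose (B + 2) * (m + B).choose B ≤
      (m + (B + 1)).choose (B + 1) * ((m + (B + 1)).choose (B + 1)) := by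
  have h1 := Nat.add_one_mul_choose_eq (m + B + 1) (B + 1)
  have h2 := Nat.add_one_mul_choose_eq (m + B) B
  have e2 : m + (B + 2) = (m + B + 1) + 1 := by omega
  have e1 : m + (B + 1) = (m + B) + 1 := by omega
  rw [e1, e2]
  -- h1 : (m+B+2) * (m+B+1).choose (B+1) = (m+B+2).choose (B+2) * (B+2)
  -- h2 : (m+B+1) * (m+B).choose B = (m+B+1).choose (B+1) * (B+1)
  set a := (m + B).choose B with ha
  set b := (m + B + 1).choose (B + 1) with hb
  set c := (m + B + 1 + 1).choose (B + 1 + 1) with hc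
  have key : c * a * ((B + 2) * (m + B + 1)) = b * b * ((B + 1) * (m + B + 2)) := by
    have e3 : c * a * ((B + 2) * (m + B + 1)) = (c * (B + 1 + 1)) * ((m + B + 1) * a) := by ring
    rw [e3, ← h1, h2]
    ring
  have hle : (B + 1) * (m + B + 2) ≤ (B + 2) * (m + B + 1) := by nlinarith
  have hpos : 0 < (B + 2) * (m + B + 1) := by positivity
  have h4 : c * a * ((B + 2) * (m + B + 1)) ≤ b * b * ((B + 2) * (m + B + 1)) := by
    calc c * a * ((B + 2) * (m + B + 1)) = b * b * ((B + 1) * (m + B + 2)) := key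
      _ ≤ b * b * ((B + 2) * (m + B + 1)) := Nat.mul_le_mul_left _ hle
  exact Nat.le_of_mul_le_mul_right h4 hpos

/-- Corollary 1: the blocking term strictly decreases, hence the throughput
capacity strictly increases, with the relay-buffer size. -/
theorem stmt5 (n : ℕ) (hn : 3 ≤ n) (β : ℝ) (hβ : 0 < β)
    (s : ℕ → ℝ)
    (hs : ∀ B, s B = ((n - 3 + B).choose B : ℝ) * β ^ B
        / ∑ i ∈ Finset.range (B + 1), ((n - 3 + i).choose i : ℝ) * β ^ i) :
    (∀ B, s (B + 1) < s B) ∧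
    ∀ p_sd p_sr : ℝ, 0 ≤ p_sd → 0 < p_sr →
      StrictMono (fun B : ℕ => p_sd + p_sr * (1 - s B)) := by
  obtain ⟨m, rfl⟩ : ∃ m, n = m + 3 := ⟨n - 3, by omega⟩
  set t : ℕ → ℝ := fun i => ((m + i).choose i : ℝ) * β ^ i with ht
  have hs' : ∀ B, s B = t B / ∑ i ∈ Finset.range (B + 1), t i := by
    intro B
    simp only [hs, ht, Nat.add_sub_cancel]
  have htpos : ∀ i, 0 < t i := by
    intro i
    exact mul_pos (by exact_mod_cast Nat.choose_pos (Nat.le_add_left i m)) (pow_pos hβ i)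
  have hSpos : ∀ B, 0 < ∑ i ∈ Finset.range (B + 1), t i := by
    intro B
    exact Finset.sum_pos (fun i _ => htpos i) ⟨0, by simp⟩
  have hlc : ∀ B, t (B + 2) * t B ≤ t (B + 1) * t (B + 1) := by
    intro B
    have h : ((m + (B + 2)).choose (B + 2) * (m + B).choose B : ℝ) ≤
        ((m + (B + 1)).choose (B + 1) * ((m + (B + 1)).choose (B + 1)) : ℝ) := by
      exact_mod_cast binom_logconc m B
    have hpow : β ^ (B + 2) * β ^ B = β ^ (B + 1) * β ^ (B + 1) := by ring
    simp only [ht]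
    calc ((m + (B + 2)).choose (B + 2) : ℝ) * β ^ (B + 2) * (((m + B).choose B : ℝ) * β ^ B)
        = ((m + (B + 2)).choose (B + 2) * (m + B).choose B : ℝ) * (β ^ (B + 2) * β ^ B) := by
          push_cast; ring
      _ ≤ ((m + (B + 1)).choose (B + 1) * ((m + (B + 1)).choose (B + 1)) : ℝ) *
            (β ^ (B + 2) * β ^ B) := by
          apply mul_le_mul_of_nonneg_right h; positivity
      _ = ((m + (B + 1)).choose (B + 1) : ℝ) * β ^ (B + 1) *
            (((m + (B + 1)).choose (B + 1) : ℝ) * β ^ (B + 1)) := by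
          rw [hpow]; push_cast; ring
  have key : ∀ B, t (B + 1) * (∑ i ∈ Finset.range (B + 1), t i) <
      t B * (∑ i ∈ Finset.range (B + 2), t i) := by
    intro B
    induction B with
    | zero =>
        simp only [Finset.sum_range_succ, Finset.sum_range_zero, zero_add]
        nlinarith [htpos 0, htpos 1, mul_pos (htpos 0) (htpos 0)]
    | succ B ih =>
        have hA := hSpos B
        have hA1 := hSpos (B + 1)
        have h1 : t (B + 2) * (∑ i ∈ Finset.range (B + 1), t i) <
            t (B + 1) * (∑ i ∈ Finset.range (B + 2), t i) := by
          have hmul : t (B + 1) * (t (B + 2) * (∑ i ∈ Finset.range (B + 1), t i)) <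
              t (B + 1) * (t (B + 1) * (∑ i ∈ Finset.range (B + 2), t i)) := by
            calc t (B + 1) * (t (B + 2) * (∑ i ∈ Finset.range (B + 1), t i))
                = t (B + 2) * (t (B + 1) * (∑ i ∈ Finset.range (B + 1), t i)) := by ring
              _ < t (B + 2) * (t B * (∑ i ∈ Finset.range (B + 2), t i)) := by
                  exact mul_lt_mul_of_pos_left ih (htpos (B + 2))
              _ = (t (B + 2) * t B) * (∑ i ∈ Finset.range (B + 2), t i) := by ring
              _ ≤ (t (B + 1) * t (B + 1)) * (∑ i ∈ Finset.range (B + 2), t i) := by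
                  exact mul_le_mul_of_nonneg_right (hlc B) (le_of_lt hA1)
              _ = t (B + 1) * (t (B + 1) * (∑ i ∈ Finset.range (B + 2), t i)) := by ring
          exact lt_of_mul_lt_mul_left hmul (le_of_lt (htpos (B + 1)))
        have e : (∑ i ∈ Finset.range (B + 3), t i)
            = (∑ i ∈ Finset.range (B + 2), t i) + t (B + 2) := by
          rw [Finset.sum_range_succ]
        have e2 : (∑ i ∈ Finset.range (B + 2), t i)
            = (∑ i ∈ Finset.range (B + 1), t i) + t (B + 1) := by
          rw [Finset.sum_range_succ]
        rw [e]
        nlinarith [h1, htpos (B + 1), htpos (B + 2), e2]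
  have hdec : ∀ B, s (B + 1) < s B := by
    intro B
    rw [hs', hs']
    rw [div_lt_div_iff₀ (hSpos (B + 1)) (hSpos B)]
    exact key B
  refine ⟨hdec, ?_⟩
  intro p_sd p_sr hpsd hpsr
  apply strictMono_nat_of_lt_succ
  intro B
  have := hdec B
  nlinarith [this, hpsr]
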